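/- Let K^σ be a positive definite kernel on a set 𝒵 with RKHS H, let Z = (z₁,…,z_n) be training inputs, S an n×k real matrix with linearly independent columns, and C = S(Sᵀ K^σ(Z,Z) S)⁻¹ Sᵀ. For a test point z define the approximate posterior mean functional μ̂[y](z) = Σ(z,Z) C y(Z) (zero prior mean) where Σ(z,Z) = K^σ(z,Z) when z ∉ Z. Then sup over y ∈ H with ‖y‖_H ≤ 1 of |y(z) − μ̂[y](z)| equals ‖K^σ(·,z) − K^σ(·,Z) C K^σ(Z,z)‖_H = √(K^σ(z,z) − K^σ(z,Z) C K^σ(Z,z)). That is, the worst-case prediction error over the RKHS unit ball equals the approximate posterior standard deviation. -/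

import Mathlib

open Matrix

lemma sup_abs_inner_unit_ball {H : Type*} [NormedAddCommGroup H] [InnerProductSpace ℝ H]
    (w : H) :
    (⨆ y : {y : H // ‖y‖ ≤ 1}, |(inner ℝ w (y : H) : ℝ)|) = ‖w‖ := by
  haveI : Nonempty {y : H // ‖y‖ ≤ 1} := ⟨⟨0, by simp⟩⟩
  have hbdd : BddAbove (Set.range fun y : {y : H // ‖y‖ ≤ 1} => |(inner ℝ w (y : H) : ℝ)|) := by
    refine ⟨‖w‖, ?_⟩
    rintro x ⟨y, rfl⟩
    calc |(inner ℝ w (y : H) : ℝ)| ≤ ‖w‖ * ‖(y : H)‖ := abs_real_inner_le_norm _ _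
    _ ≤ ‖w‖ * 1 := by gcongr; exact y.2
    _ = ‖w‖ := mul_one _
  refine le_antisymm (ciSup_le fun y => ?_) ?_
  · calc |(inner ℝ w (y : H) : ℝ)| ≤ ‖w‖ * ‖(y : H)‖ := abs_real_inner_le_norm _ _
    _ ≤ ‖w‖ * 1 := by gcongr; exact y.2
    _ = ‖w‖ := mul_one _
  · by_cases hw : w = 0
    · simp only [hw, norm_zero]
      have := le_ciSup hbdd (⟨0, by simp⟩ : {y : H // ‖y‖ ≤ 1})
      simpa [hw] using this.trans_eq' (by simp)
    · have hn : ‖w‖ ≠ 0 := norm_ne_zero_iff.mpr hw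
      have hmem : ‖(‖w‖⁻¹ • w)‖ ≤ 1 := by
        rw [norm_smul, norm_inv, norm_norm, inv_mul_cancel₀ hn]
      have := le_ciSup hbdd (⟨‖w‖⁻¹ • w, hmem⟩ : {y : H // ‖y‖ ≤ 1})
      have hval : |(inner ℝ w (‖w‖⁻¹ • w) : ℝ)| = ‖w‖ := by
        rw [real_inner_smul_right, real_inner_self_eq_norm_sq]
        rw [abs_of_nonneg (by positivity)]
        field_simp
      rw [hval] at this
      exact this

lemma gp_matrix_aux {n k : ℕ} (K : Matrix (Fin n) (Fin n) ℝ) (hK : K.PosDef)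
    (S : Matrix (Fin n) (Fin k) ℝ)
    (hS : LinearIndependent ℝ (fun j : Fin k => Sᵀ j)) :
    (S * (Sᵀ * K * S)⁻¹ * Sᵀ)ᵀ = S * (Sᵀ * K * S)⁻¹ * Sᵀ ∧
    (S * (Sᵀ * K * S)⁻¹ * Sᵀ) * K * (S * (Sᵀ * K * S)⁻¹ * Sᵀ)
      = S * (Sᵀ * K * S)⁻¹ * Sᵀ := by
  set M := Sᵀ * K * S with hMdef
  have hSH : Sᴴ = Sᵀ := rfl
  have hMherm : M.IsHermitian := by
    have := Matrix.isHermitian_conjTranspose_mul_mul S hK.isHermitian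
    rwa [hSH] at this
  have hMPD : M.PosDef := by
    refine Matrix.PosDef.of_dotProduct_mulVec_pos hMherm fun x hx => ?_
    have hSx : S *ᵥ x ≠ 0 := by
      intro h
      apply hx
      have h0 : ∑ j, x j • Sᵀ j = 0 := by
        funext i
        have := congrFun h i
        simpa [Matrix.mulVec, dotProduct, mul_comm] using this
      have := Fintype.linearIndependent_iff.mp hS x h0
      funext j; exact this j
    have := hK.dotProduct_mulVec_pos hSx
    have heq : star x ⬝ᵥ (M *ᵥ x) = star (S *ᵥ x) ⬝ᵥ (K *ᵥ (S *ᵥ x)) := by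
      simp only [hMdef, ← Matrix.mulVec_mulVec]
      rw [Matrix.dotProduct_mulVec, star_trivial, star_trivial,
        Matrix.vecMul_transpose]
    rwa [heq]
  have hMT : Mᵀ = M := hMherm
  haveI := hMPD.isUnit.invertible
  constructor
  · rw [Matrix.transpose_mul, Matrix.transpose_mul, Matrix.transpose_transpose,
      Matrix.transpose_nonsing_inv, hMT, Matrix.mul_assoc]
  · calc (S * M⁻¹ * Sᵀ) * K * (S * M⁻¹ * Sᵀ)
        = S * M⁻¹ * (Sᵀ * K * S) * (M⁻¹ * Sᵀ) := by
          simp only [Matrix.mul_assoc]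
      _ = S * (M⁻¹ * M * M⁻¹) * Sᵀ := by
          rw [← hMdef]; simp only [Matrix.mul_assoc]
      _ = S * M⁻¹ * Sᵀ := by
          rw [Matrix.nonsing_inv_mul _ (Matrix.isUnit_iff_isUnit_det _ |>.mp hMPD.isUnit),
            Matrix.one_mul, Matrix.mul_assoc]


/-- Worst-case error of iteratively approximated GP regression: with `ev z ∈ H` the
representer of evaluation at `z` (so `y(z) = ⟪ev z, y⟫` and
`K^σ(z,z') = ⟪ev z, ev z'⟫`), training inputs `Zs`, actions `S` with linearly
independent columns, `C = S (Sᵀ K^σ(Z,Z) S)⁻¹ Sᵀ`, and approximate posterior mean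
`μ̂[y](z) = K^σ(z,Z) C y(Z)`, the worst-case error over the RKHS unit ball equals
`‖K^σ(·,z) - K^σ(·,Z) C K^σ(Z,z)‖_H = √(K^σ(z,z) - K^σ(z,Z) C K^σ(Z,z))`. -/
theorem worst_case_error_iter_gp {n k : ℕ} {Z : Type*} {H : Type*}
    [NormedAddCommGroup H] [InnerProductSpace ℝ H]
    (ev : Z → H)
    (Zs : Fin n → Z) (hZs : Function.Injective Zs)
    (z : Z) (hz : ∀ i, z ≠ Zs i)
    (hPD : (Matrix.of fun i j : Fin n =>
      (inner ℝ (ev (Zs i)) (ev (Zs j)) : ℝ)).PosDef)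
    (S : Matrix (Fin n) (Fin k) ℝ)
    (hS : LinearIndependent ℝ (fun j : Fin k => Sᵀ j))
    (C : Matrix (Fin n) (Fin n) ℝ)
    (hC : C = S * (Sᵀ * (Matrix.of fun i j : Fin n =>
      (inner ℝ (ev (Zs i)) (ev (Zs j)) : ℝ)) * S)⁻¹ * Sᵀ) :
    (⨆ y : {y : H // ‖y‖ ≤ 1},
        |(inner ℝ (ev z) (y : H) : ℝ) -
          ∑ i, ∑ j, (inner ℝ (ev z) (ev (Zs i)) : ℝ) * C i j *
            (inner ℝ (ev (Zs j)) (y : H) : ℝ)|)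
      = ‖ev z - ∑ i, ∑ j,
          ((inner ℝ (ev z) (ev (Zs i)) : ℝ) * C i j) • ev (Zs j)‖ ∧
    ‖ev z - ∑ i, ∑ j, ((inner ℝ (ev z) (ev (Zs i)) : ℝ) * C i j) • ev (Zs j)‖
      = Real.sqrt ((inner ℝ (ev z) (ev z) : ℝ) -
          ∑ i, ∑ j, (inner ℝ (ev z) (ev (Zs i)) : ℝ) * C i j *
            (inner ℝ (ev (Zs j)) (ev z) : ℝ)) := by
  classical
  set K : Matrix (Fin n) (Fin n) ℝ :=
    Matrix.of fun i j : Fin n => (inner ℝ (ev (Zs i)) (ev (Zs j)) : ℝ) with hKdef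
  obtain ⟨hCT, hCKC⟩ := gp_matrix_aux K hPD S hS
  rw [← hC] at hCT hCKC
  set a : Fin n → ℝ := fun i => (inner ℝ (ev z) (ev (Zs i)) : ℝ) with hadef
  have haa : ∀ i, (inner ℝ (ev z) (ev (Zs i)) : ℝ) = a i := fun i => rfl
  have haa' : ∀ i, (inner ℝ (ev (Zs i)) (ev z) : ℝ) = a i := fun i =>
    (real_inner_comm _ _).trans (haa i)
  have hKa : ∀ i j, (inner ℝ (ev (Zs i)) (ev (Zs j)) : ℝ) = K i j := fun i j => rfl
  set s : H := ∑ i, ∑ j, (a i * C i j) • ev (Zs j) with hsdef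
  -- alternative form of s
  have hs_alt : s = ∑ j, (C *ᵥ a) j • ev (Zs j) := by
    rw [hsdef, Finset.sum_comm]
    refine Finset.sum_congr rfl fun j _ => ?_
    rw [← Finset.sum_smul]
    congr 1
    have : ∀ i, a i * C i j = C j i * a i := fun i => by
      rw [mul_comm]
      congr 1
      exact (congrFun (congrFun hCT i) j).symm
    simp only [this, Matrix.mulVec, dotProduct]
  set q : ℝ := a ⬝ᵥ (C *ᵥ a) with hqdef
  have hq_sum : ∑ i, ∑ j, a i * C i j * a j = q := by
    simp only [hqdef, dotProduct, Matrix.mulVec, Finset.mul_sum, mul_assoc]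
  have hinner1 : (inner ℝ (ev z) s : ℝ) = q := by
    rw [hs_alt, inner_sum]
    simp only [real_inner_smul_right, haa]
    rw [hqdef, dotProduct_comm]
    simp only [dotProduct]
  have hinner2 : (inner ℝ s (ev z) : ℝ) = q := by
    rw [real_inner_comm]; exact hinner1
  have hinner3 : (inner ℝ s s : ℝ) = q := by
    rw [hs_alt, sum_inner]
    simp only [inner_sum, real_inner_smul_left, real_inner_smul_right, hKa]
    have hKsym : ∀ i j, K i j = K j i := fun i j => real_inner_comm _ _
    have step1 : ∀ b : Fin n → ℝ, ∑ x, ∑ x1, b x1 * (b x * K x x1)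
        = b ⬝ᵥ (K *ᵥ b) := by
      intro b
      rw [Finset.sum_comm]
      simp only [dotProduct, Matrix.mulVec, Finset.mul_sum]
      exact Finset.sum_congr rfl fun x1 _ => Finset.sum_congr rfl fun x _ => by
        rw [hKsym x x1]; ring
    rw [step1 (C *ᵥ a)]
    have hvec : C *ᵥ a = a ᵥ* C := by
      rw [← Matrix.vecMul_transpose, hCT]
    calc (C *ᵥ a) ⬝ᵥ (K *ᵥ (C *ᵥ a))
        = (a ᵥ* C) ⬝ᵥ (K *ᵥ (C *ᵥ a)) := by rw [hvec]
      _ = a ⬝ᵥ (C *ᵥ (K *ᵥ (C *ᵥ a))) := (Matrix.dotProduct_mulVec _ _ _).symm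
      _ = a ⬝ᵥ ((C * K * C) *ᵥ a) := by
          rw [Matrix.mulVec_mulVec, Matrix.mulVec_mulVec, Matrix.mul_assoc]
      _ = q := by rw [hCKC, hqdef]
  have hww : (inner ℝ (ev z - s) (ev z - s) : ℝ) = (inner ℝ (ev z) (ev z) : ℝ) - q := by
    rw [inner_sub_sub_self, hinner1, hinner2, hinner3]
    ring
  constructor
  · rw [← sup_abs_inner_unit_ball (ev z - s)]
    refine iSup_congr fun y => ?_
    congr 1
    rw [inner_sub_left]
    congr 1
    rw [hsdef, sum_inner]
    refine Finset.sum_congr rfl fun i _ => ?_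
    rw [sum_inner]
    refine Finset.sum_congr rfl fun j _ => ?_
    rw [real_inner_smul_left, haa, mul_assoc]
  · simp only [haa, haa']
    rw [hq_sum, ← hww, real_inner_self_eq_norm_sq, Real.sqrt_sq (norm_nonneg _)]
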